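/- Let X be a topological Riesz space, A ⊂ X an acceptance set with nonempty interior, and S a traded asset such that ρ_{A,S} does not attain the value −∞. If S_T is a weak topological unit, then ρ_{A,S} is finitely valued on X. -/

import Mathlib

open Filter Topology

variable {X : Type*} [Lattice X] [AddCommGroup X] [Module ℝ X]
  [CovariantClass X X (· + ·) (· ≤ ·)] [PosSMulMono ℝ X]
  [TopologicalSpace X] [IsTopologicalAddGroup X] [ContinuousSMul ℝ X]

/-- The risk measure `ρ_{A,S}(x) = inf {m : x + (m/S₀)·S_T ∈ A}`, valued in `EReal`. -/
noncomputable def rho (A : Set X) (S0 : ℝ) (ST : X) (x : X) : EReal :=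
  sInf ((fun r : ℝ => (r : EReal)) '' {r : ℝ | x + (r / S0) • ST ∈ A})

/-- A set is monotone if it contains, with any element, every larger element. -/
def MonotoneSet (A : Set X) : Prop := ∀ x ∈ A, ∀ y, x ≤ y → y ∈ A

/-- An acceptance set: nonempty, proper, and monotone. -/
def AcceptanceSet (A : Set X) : Prop := A.Nonempty ∧ A ≠ Set.univ ∧ MonotoneSet A

/-- The algebraic core (algebraic interior) of a set. -/
def algCore (A : Set X) : Set X :=
  {x | ∀ y : X, ∃ ε > 0, ∀ l : ℝ, |l| < ε → x + l • y ∈ A}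

/-- `Z` is a weak topological unit: `x ⊓ n·Z → x` for every positive `x`. -/
def WeakTopologicalUnit (Z : X) : Prop :=
  0 ≤ Z ∧ ∀ x : X, 0 ≤ x →
    Tendsto (fun n : ℕ => x ⊓ ((n : ℝ) • Z)) atTop (𝓝 x)

/-- `Z` is strictly positive: every nonzero positive continuous linear functional is
strictly positive on `Z`. -/
def StrictlyPositiveElt (Z : X) : Prop :=
  0 ≤ Z ∧ ∀ ψ : X →L[ℝ] ℝ, ψ ≠ 0 → (∀ x : X, 0 ≤ x → 0 ≤ ψ x) → 0 < ψ Z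

/-- The topology is locally solid: every neighborhood of zero contains a solid one. -/
def LocallySolidAtZero (X : Type*) [Lattice X] [AddCommGroup X] [TopologicalSpace X] : Prop :=
  ∀ U ∈ 𝓝 (0 : X), ∃ V ∈ 𝓝 (0 : X), V ⊆ U ∧ ∀ x y : X, y ∈ V → |x| ≤ |y| → x ∈ V

/-- in a topological Riesz space, if the acceptance set has nonempty
interior, ρ_{A,S} never takes the value -∞, and S_T is a weak topological unit,
then ρ_{A,S} is finitely valued. -/
theorem rho_finite_of_weakTopologicalUnit (A : Set X) (S0 : ℝ) (ST : X)
    (hA : AcceptanceSet A) (hint : (interior A).Nonempty)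
    (hS0 : 0 < S0) (hSTne : ST ≠ 0)
    (hunit : WeakTopologicalUnit ST)
    (hnobot : ∀ x : X, rho A S0 ST x ≠ ⊥) :
    ∀ x : X, rho A S0 ST x ≠ ⊤ ∧ rho A S0 ST x ≠ ⊥ := by
  intro x
  refine ⟨?_, hnobot x⟩
  obtain ⟨u, hu⟩ := hint
  have hmono := hA.2.2
  -- interior A is closed under going up
  have hmonoInt : ∀ a ∈ interior A, ∀ b : X, a ≤ b → b ∈ interior A := by
    intro a ha b hab
    have himg : IsOpen ((· + (b - a)) '' interior A) :=
      (isOpenMap_add_right (b - a)) _ isOpen_interior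
    have hsub : ((· + (b - a)) '' interior A) ⊆ A := by
      rintro _ ⟨z, hz, rfl⟩
      exact hmono z (interior_subset hz) _ (le_add_of_nonneg_right (sub_nonneg.mpr hab))
    have hb : b ∈ ((· + (b - a)) '' interior A) := ⟨a, ha, by simp⟩
    exact interior_maximal hsub himg hb
  -- positive part of u - x
  set p : X := (u - x) ⊔ 0 with hp
  have hppos : (0 : X) ≤ p := le_sup_right
  have hxpu : x + p ∈ interior A := by
    have : u ≤ x + p := by
      have h1 : u - x ≤ p := le_sup_left
      calc u = x + (u - x) := by abel
        _ ≤ x + p := add_le_add_right h1 x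
    exact hmonoInt u hu _ this
  -- convergence x + (p ⊓ n • ST) → x + p
  have htend : Tendsto (fun n : ℕ => x + (p ⊓ ((n : ℝ) • ST))) atTop (𝓝 (x + p)) :=
    ((hunit.2 p hppos).const_add x)
  have hev : ∀ᶠ n : ℕ in atTop, x + (p ⊓ ((n : ℝ) • ST)) ∈ interior A :=
    htend.eventually (isOpen_interior.eventually_mem hxpu)
  obtain ⟨n, hn⟩ := hev.exists
  have hxn : x + (n : ℝ) • ST ∈ A := by
    refine hmono _ (interior_subset hn) _ ?_
    exact add_le_add_right inf_le_right x
  -- hence rho A S0 ST x ≤ n * S0 < ⊤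
  have hmem : ((n : ℝ) * S0) ∈ {r : ℝ | x + (r / S0) • ST ∈ A} := by
    have : ((n : ℝ) * S0) / S0 = (n : ℝ) := mul_div_cancel_right₀ _ (ne_of_gt hS0)
    simpa [Set.mem_setOf_eq, this] using hxn
  have hle : rho A S0 ST x ≤ (((n : ℝ) * S0 : ℝ) : EReal) :=
    sInf_le ⟨_, hmem, rfl⟩
  exact ne_top_of_le_ne_top (EReal.coe_ne_top _) hle
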